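/- Let D be a finite nonempty set, v : D → ℝ, and let μ be the standard Gumbel measure on ℝ. For each d ∈ D, the probability under the product Gumbel measure that alternative d attains the maximum is the multinomial-logit probability: (⊗_{d'∈D} μ){ε : D → ℝ | ∀ d' ∈ D, v(d) + ε(d) ≥ v(d') + ε(d')} = exp(v(d)) / Σ_{d' ∈ D} exp(v(d')). -/

import Mathlib

open MeasureTheory Real Set Filter

lemma lintegral_image_1d {s : Set ℝ} {f f' : ℝ → ℝ} (hs : MeasurableSet s)
    (hf' : ∀ x ∈ s, HasDerivWithinAt f (f' x) s x) (hf : Set.InjOn f s) (g : ℝ → ENNReal) :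
    ∫⁻ x in f '' s, g x = ∫⁻ x in s, ENNReal.ofReal |f' x| * g (f x) := by
  simpa only [ContinuousLinearMap.det_toSpanSingleton] using
    lintegral_image_eq_lintegral_abs_det_fderiv_mul volume hs
      (fun x hx => (hf' x hx).hasFDerivWithinAt) hf g

lemma lintegral_exp_neg_mul_Ioi {K : ℝ} (hK : 0 < K) (c : ℝ) :
    ∫⁻ u in Ioi c, ENNReal.ofReal (Real.exp (-(K * u))) =
      ENNReal.ofReal (Real.exp (-(K * c)) / K) := by
  have hint : IntegrableOn (fun u : ℝ => Real.exp (-(K * u))) (Ioi c) := by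
    simpa [neg_mul] using exp_neg_integrableOn_Ioi c hK
  rw [← ofReal_integral_eq_lintegral_ofReal hint
      (Filter.Eventually.of_forall fun x => (Real.exp_pos _).le)]
  congr 1
  have hderiv : ∀ x ∈ Ioi c, HasDerivAt (fun u : ℝ => -Real.exp (-(K * u)) / K)
      (Real.exp (-(K * x))) x := by
    intro x _
    have hd1 : HasDerivAt (fun u : ℝ => -(K * u)) (-K) x := by
      simpa using ((hasDerivAt_id x).const_mul K).fun_neg
    have hd2 := (hd1.exp).fun_neg.div_const K
    exact hd2.congr_deriv (by field_simp)
  have htend : Tendsto (fun u : ℝ => -Real.exp (-(K * u)) / K) atTop (nhds 0) := by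
    have ht1 : Tendsto (fun u : ℝ => -(K * u)) atTop atBot := by
      simpa using tendsto_neg_atBot_iff.mpr ((tendsto_const_mul_atTop_of_pos hK).mpr tendsto_id)
    have ht2 := (Real.tendsto_exp_atBot.comp ht1).neg.div_const K
    simpa using ht2
  have := integral_Ioi_of_hasDerivAt_of_tendsto
    (f := fun u : ℝ => -Real.exp (-(K * u)) / K) ?_ hderiv hint htend
  · rw [this]; field_simp; ring
  · exact (((Real.continuous_exp.comp (by continuity)).neg.div_const K).continuousAt).continuousWithinAt

lemma hasDerivWithinAt_neg_log {x : ℝ} (hx : 0 < x) (s : Set ℝ) :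
    HasDerivWithinAt (fun u : ℝ => -Real.log u) (-x⁻¹) s x :=
  ((Real.hasDerivAt_log hx.ne').neg).hasDerivWithinAt

lemma injOn_neg_log : Set.InjOn (fun u : ℝ => -Real.log u) (Ioi 0) := by
  intro a ha b hb h
  have h' : Real.log a = Real.log b := by
    have := congrArg Neg.neg h
    simpa using this
  rw [← Real.exp_log (mem_Ioi.mp ha), h', Real.exp_log (mem_Ioi.mp hb)]

lemma neg_log_image_Ioi (c : ℝ) (hc : 0 < c) :
    (fun u : ℝ => -Real.log u) '' Ioi c = Iio (-Real.log c) := by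
  ext x
  constructor
  · rintro ⟨u, hu, rfl⟩
    simpa using Real.log_lt_log hc hu
  · intro hx
    have hx' : x < -Real.log c := mem_Iio.mp hx
    refine ⟨Real.exp (-x), mem_Ioi.mpr ?_, by simp⟩
    calc c = Real.exp (Real.log c) := (Real.exp_log hc).symm
    _ < Real.exp (-x) := Real.exp_lt_exp.mpr (by linarith)

lemma neg_log_image_Ioi_zero : (fun u : ℝ => -Real.log u) '' Ioi 0 = univ :=
  eq_univ_of_forall fun x => ⟨Real.exp (-x), Real.exp_pos _, by simp⟩

lemma gumbel_integrand_aux (K u : ℝ) (hu0 : 0 < u) :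
    ENNReal.ofReal |(-u⁻¹)| *
      ENNReal.ofReal (Real.exp (- -Real.log u - K * Real.exp (- -Real.log u))) =
      ENNReal.ofReal (Real.exp (-(K * u))) := by
  rw [abs_of_neg (neg_lt_zero.mpr (inv_pos.mpr hu0)), neg_neg,
    ← ENNReal.ofReal_mul (inv_nonneg.mpr hu0.le)]
  congr 1
  rw [neg_neg, sub_eq_add_neg, Real.exp_add, Real.exp_log hu0, ← mul_assoc,
    inv_mul_cancel₀ hu0.ne', one_mul]

/-- Key integral: ∫ exp(-x - K exp(-x)) over Iio t. -/
lemma lintegral_gumbel_Iio {K : ℝ} (hK : 0 < K) (t : ℝ) :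
    ∫⁻ x in Iio t, ENNReal.ofReal (Real.exp (-x - K * Real.exp (-x))) =
      ENNReal.ofReal (Real.exp (-(K * Real.exp (-t))) / K) := by
  have hc : (0:ℝ) < Real.exp (-t) := Real.exp_pos _
  have himg : (fun u : ℝ => -Real.log u) '' Ioi (Real.exp (-t)) = Iio t := by
    rw [neg_log_image_Ioi _ hc]; simp
  rw [← himg, lintegral_image_1d measurableSet_Ioi
      (fun x hx => hasDerivWithinAt_neg_log (lt_trans hc hx) _)
      (injOn_neg_log.mono (fun x hx => lt_trans hc hx)),
    ← lintegral_exp_neg_mul_Ioi hK (Real.exp (-t))]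
  exact setLIntegral_congr_fun measurableSet_Ioi
    (fun u hu => gumbel_integrand_aux K u (lt_trans hc hu))

lemma lintegral_gumbel_univ {K : ℝ} (hK : 0 < K) :
    ∫⁻ x : ℝ, ENNReal.ofReal (Real.exp (-x - K * Real.exp (-x))) = ENNReal.ofReal (1 / K) := by
  have himg := lintegral_image_1d (f := fun u : ℝ => -Real.log u) (f' := fun u => -u⁻¹)
    measurableSet_Ioi (fun x hx => hasDerivWithinAt_neg_log hx _) injOn_neg_log
    (fun x => ENNReal.ofReal (Real.exp (-x - K * Real.exp (-x))))
  rw [neg_log_image_Ioi_zero] at himg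
  rw [← setLIntegral_univ, himg,
    show ENNReal.ofReal (1 / K) = ENNReal.ofReal (Real.exp (-(K * 0)) / K) by norm_num,
    ← lintegral_exp_neg_mul_Ioi hK 0]
  exact setLIntegral_congr_fun measurableSet_Ioi
    (fun u hu => gumbel_integrand_aux K u hu)

/-- The standard Gumbel (Type-I extreme value) measure on ℝ: the measure with
density `x ↦ exp (-x - exp (-x))` with respect to Lebesgue measure. -/
noncomputable def gumbelMeasure : Measure ℝ :=
  MeasureTheory.volume.withDensity
    (fun x => ENNReal.ofReal (Real.exp (-x - Real.exp (-x))))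

lemma gumbel_Iic (t : ℝ) :
    gumbelMeasure (Iic t) = ENNReal.ofReal (Real.exp (-Real.exp (-t))) := by
  rw [gumbelMeasure, withDensity_apply _ measurableSet_Iic,
    Measure.restrict_congr_set Iio_ae_eq_Iic.symm]
  have := lintegral_gumbel_Iio one_pos t
  simpa using this

instance : IsProbabilityMeasure gumbelMeasure := ⟨by
  rw [gumbelMeasure, withDensity_apply _ MeasurableSet.univ, Measure.restrict_univ]
  have := lintegral_gumbel_univ one_pos
  simpa using this⟩

lemma lintegral_pi_point {ι : Type*} [F : Fintype ι] (i0 : ι) (hsub : ∀ i : ι, i = i0)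
    (μ : Measure ℝ) [SigmaFinite μ] {g : ℝ → ENNReal} (hg : Measurable g) :
    ∫⁻ a : ι → ℝ, g (a i0) ∂(Measure.pi fun _ : ι => μ) = ∫⁻ x, g x ∂μ := by
  haveI U : Unique ι := ⟨⟨i0⟩, fun j => hsub j⟩
  rw [Subsingleton.elim F Unique.fintype,
    ← (measurePreserving_funUnique μ ι).lintegral_comp hg]
  refine lintegral_congr fun a => ?_
  have he : (MeasurableEquiv.funUnique ι ℝ) a = a default := rfl
  rw [he, hsub default]

set_option maxHeartbeats 1000000 in
/-- Under i.i.d. standard Gumbel shocks, the probability that alternative `d`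
attains the maximum of `v d' + ε d'` is the multinomial-logit probability. -/
theorem gumbel_argmax_prob_eq_logit {D : Type*} [Fintype D] [Nonempty D]
    (v : D → ℝ) (d : D) :
    (Measure.pi fun _ : D => gumbelMeasure)
        {ε : D → ℝ | ∀ d' : D, v d + ε d ≥ v d' + ε d'}
      = ENNReal.ofReal (Real.exp (v d) / ∑ d' : D, Real.exp (v d')) := by
  classical
  set S' : ℝ := ∑ j : {i : D // ¬ i = d}, Real.exp (v j - v d) with hS'def
  have hS'0 : 0 ≤ S' := Finset.sum_nonneg fun j _ => (Real.exp_pos _).le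
  set K : ℝ := 1 + S' with hKdef
  have hK : 0 < K := by positivity
  set S : Set (D → ℝ) := {ε : D → ℝ | ∀ d' : D, v d + ε d ≥ v d' + ε d'} with hSdef
  have hSmeas : MeasurableSet S := by
    have : S = ⋂ d' : D, {ε : D → ℝ | v d' + ε d' ≤ v d + ε d} := by
      ext ε; simp [hSdef, ge_iff_le]
    rw [this]
    exact MeasurableSet.iInter fun d' =>
      measurableSet_le (measurable_const.add (measurable_pi_apply d'))
        (measurable_const.add (measurable_pi_apply d))
  let e := MeasurableEquiv.piEquivPiSubtypeProd (fun _ : D => ℝ) (fun i => i = d)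
  have hmp := measurePreserving_piEquivPiSubtypeProd (fun _ : D => gumbelMeasure)
    (fun i => i = d)
  set T := e.symm ⁻¹' S with hTdef
  have hTmeas : MeasurableSet T := e.symm.measurable hSmeas
  have hpre : ⇑(MeasurableEquiv.piEquivPiSubtypeProd (fun _ : D => ℝ) (fun i => i = d)) ⁻¹' T
      = S := by
    ext ε
    show e.symm (e ε) ∈ S ↔ ε ∈ S
    rw [e.symm_apply_apply]
  have h1 := hmp.measure_preimage hTmeas.nullMeasurableSet
  rw [hpre] at h1
  have hesymm : ∀ (a : {i : D // i = d} → ℝ) (b : {i : D // ¬ i = d} → ℝ) (i : D),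
      e.symm (a, b) i = if h : i = d then a ⟨i, h⟩ else b ⟨i, h⟩ := fun a b i => rfl
  have hslice : ∀ a : {i : D // i = d} → ℝ, Prod.mk a ⁻¹' T =
      Set.univ.pi fun j : {i : D // ¬ i = d} => Iic (a ⟨d, rfl⟩ + v d - v j) := by
    intro a
    ext b
    simp only [hTdef, Set.mem_preimage, hSdef, Set.mem_setOf_eq, Set.mem_pi, Set.mem_univ,
      true_implies, Set.mem_Iic, hesymm, ge_iff_le]
    constructor
    · intro h j
      have hj := h j
      rw [dif_neg j.2] at hj
      have hb : b ⟨(j : D), j.2⟩ = b j := rfl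
      rw [hb] at hj
      simp only [dif_pos] at hj
      linarith
    · intro h d'
      by_cases hd' : d' = d
      · subst hd'
        simp
      · have hj := h ⟨d', hd'⟩
        rw [dif_neg hd']
        simp only [dif_pos]
        linarith
  set g : ℝ → ENNReal := fun x => ENNReal.ofReal (Real.exp (-(Real.exp (-x) * S')))
    with hgdef
  have hgmeas : Measurable g := by
    refine Measurable.ennreal_ofReal ?_
    exact (Real.continuous_exp.comp (by continuity)).measurable
  have hprod : ∀ x : ℝ,
      (∏ j : {i : D // ¬ i = d}, ENNReal.ofReal (Real.exp (-Real.exp (-(x + v d - v ↑j)))))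
        = g x := by
    intro x
    rw [hgdef, ← ENNReal.ofReal_prod_of_nonneg (fun j _ => (Real.exp_pos _).le), ← Real.exp_sum]
    congr 1
    have hxj : ∀ j : {i : D // ¬ i = d}, -Real.exp (-(x + v d - v ↑j))
        = -(Real.exp (-x) * Real.exp (v ↑j - v d)) := fun j => by
      rw [← Real.exp_add]; congr 2; ring
    rw [hS'def, Finset.mul_sum, ← Finset.sum_neg_distrib]
    exact congrArg Real.exp (Finset.sum_congr rfl fun j _ => hxj j)
  have h3 : ∫⁻ x, g x ∂gumbelMeasure = ENNReal.ofReal (1 / K) := by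
    rw [gumbelMeasure, lintegral_withDensity_eq_lintegral_mul _ (by fun_prop) hgmeas]
    rw [← lintegral_gumbel_univ hK]
    refine lintegral_congr fun x => ?_
    simp only [Pi.mul_apply, hgdef]
    rw [← ENNReal.ofReal_mul (Real.exp_pos _).le, ← Real.exp_add]
    congr 1
    rw [hKdef]
    ring
  have hfinal : (1:ℝ) / K = Real.exp (v d) / ∑ d' : D, Real.exp (v d') := by
    have hS'2 : S' = ∑ i ∈ Finset.univ.erase d, Real.exp (v i - v d) := by
      rw [hS'def]
      exact (Finset.sum_subtype (Finset.univ.erase d)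
        (fun x => by simp [Finset.mem_erase]) (fun i => Real.exp (v i - v d))).symm
    have hsum : ∑ d' : D, Real.exp (v d') = Real.exp (v d) * K := by
      rw [hKdef, mul_add, mul_one, hS'2, Finset.mul_sum]
      have hterm : ∀ j ∈ Finset.univ.erase d,
          Real.exp (v d) * Real.exp (v j - v d) = Real.exp (v j) := fun j _ => by
        rw [← Real.exp_add]; congr 1; ring
      rw [Finset.sum_congr rfl hterm]
      exact (Finset.add_sum_erase _ _ (Finset.mem_univ d)).symm
    rw [hsum]
    field_simp
  rw [h1, Measure.prod_apply hTmeas]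
  have hsl : ∀ a : {i : D // i = d} → ℝ,
      (Measure.pi fun _ : {i : D // ¬ i = d} => gumbelMeasure) (Prod.mk a ⁻¹' T)
        = g (a ⟨d, rfl⟩) := by
    intro a
    rw [hslice a, Measure.pi_pi]
    simp_rw [gumbel_Iic]
    exact hprod (a ⟨d, rfl⟩)
  rw [lintegral_congr hsl]
  have h4 := lintegral_pi_point (ι := {i : D // i = d}) ⟨d, rfl⟩ (fun i => Subtype.ext i.2)
    gumbelMeasure hgmeas
  rw [h3] at h4
  rw [show ENNReal.ofReal (Real.exp (v d) / ∑ d' : D, Real.exp (v d'))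
      = ENNReal.ofReal (1 / K) from (congrArg _ hfinal).symm]
  convert h4 using 2
  congr!
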